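/- arXiv:1905.10186 — 5 statements merged into one kernel-verified Lean document; each statement's English description precedes it below -/
import Mathlib

section
/- The function Φ : (0,1) → ℝ defined by Φ(y) = y⁻²(1 − 2y/(log(1+y) − log(1−y))) is monotonically increasing on (0,1). -/
open Set

/-- `Φ(y) = y⁻² (1 − 2y / (log(1+y) − log(1−y)))`. -/
noncomputable def Phi (y : ℝ) : ℝ :=
  (1 / y ^ 2) * (1 - 2 * y / (Real.log (1 + y) - Real.log (1 - y)))

noncomputable def PhiL (y : ℝ) : ℝ := Real.log (1 + y) - Real.log (1 - y)

noncomputable def PhiA (y : ℝ) : ℝ := PhiL y - 2 * y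

noncomputable def PhiG (y : ℝ) : ℝ :=
  -(PhiL y * ((3 + y ^ 2) * (1 - y ^ 2))) + (2 * y * (1 - y ^ 2) + 4 * y)

noncomputable def PhiF (y : ℝ) : ℝ := y * PhiL y + 2 * y ^ 2 / (1 - y ^ 2) - PhiL y ^ 2

lemma hasDerivAt_PhiL {y : ℝ} (h1 : -1 < y) (h2 : y < 1) :
    HasDerivAt PhiL (2 / (1 - y ^ 2)) y := by
  have ha : (0:ℝ) < 1 + y := by linarith
  have hb : (0:ℝ) < 1 - y := by linarith
  have d1 : HasDerivAt (fun z : ℝ => Real.log (1 + z)) (1 / (1 + y)) y := by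
    have := (Real.hasDerivAt_log ha.ne').comp y ((hasDerivAt_id y).const_add 1)
    simpa [one_div, Function.comp_def] using this
  have d2 : HasDerivAt (fun z : ℝ => Real.log (1 - z)) (-(1 / (1 - y))) y := by
    have := (Real.hasDerivAt_log hb.ne').comp y ((hasDerivAt_id y).const_sub 1)
    simpa [one_div, Function.comp_def] using this
  have h := d1.sub d2
  refine h.congr_deriv ?_
  rw [show (1:ℝ) - y ^ 2 = (1 + y) * (1 - y) by ring]
  field_simp [ha.ne', hb.ne']
  ring

lemma hasDerivAt_sq (y : ℝ) : HasDerivAt (fun z : ℝ => z ^ 2) (2 * y) y := by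
  simpa using hasDerivAt_pow 2 y

lemma hasDerivAt_PhiA {y : ℝ} (h1 : -1 < y) (h2 : y < 1) :
    HasDerivAt PhiA (2 * y ^ 2 / (1 - y ^ 2)) y := by
  have hne : (1 - y ^ 2) ≠ 0 := by nlinarith
  have h := (hasDerivAt_PhiL h1 h2).sub ((hasDerivAt_id y).const_mul 2)
  refine h.congr_deriv ?_
  field_simp
  ring

lemma hasDerivAt_PhiG {y : ℝ} (h1 : -1 < y) (h2 : y < 1) :
    HasDerivAt PhiG (4 * y * ((1 + y ^ 2) * PhiL y - 2 * y)) y := by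
  have hne : (1 - y ^ 2) ≠ 0 := by nlinarith
  have pL := hasDerivAt_PhiL h1 h2
  have hq : HasDerivAt (fun z : ℝ => (3 + z ^ 2) * (1 - z ^ 2))
      (2 * y * (1 - y ^ 2) + (3 + y ^ 2) * (-(2 * y))) y :=
    ((hasDerivAt_sq y).const_add 3).mul ((hasDerivAt_sq y).const_sub 1)
  have d2 : HasDerivAt (fun z : ℝ => 2 * z * (1 - z ^ 2))
      (2 * 1 * (1 - y ^ 2) + 2 * y * (-(2 * y))) y :=
    ((hasDerivAt_id y).const_mul 2).mul ((hasDerivAt_sq y).const_sub 1)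
  have d3 : HasDerivAt (fun z : ℝ => 4 * z) (4 : ℝ) y := by
    simpa using (hasDerivAt_id y).const_mul 4
  have h := ((pL.mul hq).neg).add (d2.add d3)
  refine h.congr_deriv ?_
  field_simp
  ring

lemma hasDerivAt_PhiF {y : ℝ} (h1 : -1 < y) (h2 : y < 1) :
    HasDerivAt PhiF (PhiG y / (1 - y ^ 2) ^ 2) y := by
  have hne : (1 - y ^ 2) ≠ 0 := by nlinarith
  have pL := hasDerivAt_PhiL h1 h2
  have d1 : HasDerivAt (fun z : ℝ => z * PhiL z) (1 * PhiL y + y * (2 / (1 - y ^ 2))) y :=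
    (hasDerivAt_id y).mul pL
  have d2 : HasDerivAt (fun z : ℝ => 2 * z ^ 2 / (1 - z ^ 2))
      ((2 * (2 * y) * (1 - y ^ 2) - 2 * y ^ 2 * (-(2 * y))) / (1 - y ^ 2) ^ 2) y :=
    ((hasDerivAt_sq y).const_mul 2).div ((hasDerivAt_sq y).const_sub 1) hne
  have d3 : HasDerivAt (fun z : ℝ => PhiL z ^ 2) (2 * PhiL y * (2 / (1 - y ^ 2))) y := by
    have := pL.pow 2
    simpa [Pi.pow_def] using this
  have h := (d1.add d2).sub d3
  refine h.congr_deriv ?_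
  simp only [PhiG]
  field_simp
  ring

lemma hasDerivAt_Phi {y : ℝ} (h0 : 0 < y) (h2 : y < 1) (hl : PhiL y ≠ 0) :
    HasDerivAt Phi (2 * PhiF y / (y ^ 3 * PhiL y ^ 2)) y := by
  have h1 : (-1:ℝ) < y := by linarith
  have hne : (1 - y ^ 2) ≠ 0 := by nlinarith
  have hy0 : y ≠ 0 := h0.ne'
  have pL := hasDerivAt_PhiL h1 h2
  have e1 : HasDerivAt (fun z : ℝ => 1 / z ^ 2) (-(2 * y) / (y ^ 2) ^ 2) y := by
    have := (hasDerivAt_sq y).inv (pow_ne_zero 2 hy0)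
    simpa [one_div, Pi.inv_def] using this
  have e2 : HasDerivAt (fun z : ℝ => 2 * z / PhiL z)
      ((2 * PhiL y - 2 * y * (2 / (1 - y ^ 2))) / PhiL y ^ 2) y := by
    have := ((hasDerivAt_id y).const_mul 2).div pL hl
    simpa [Pi.div_def] using this
  have e3 := e2.const_sub 1
  have h := e1.mul e3
  have hPhi : Phi = fun z : ℝ => 1 / z ^ 2 * (1 - 2 * z / PhiL z) := rfl
  rw [hPhi]
  refine h.congr_deriv ?_
  simp only [PhiF]
  field_simp
  ring

lemma pos_on_Ioo {f f' : ℝ → ℝ} (hd : ∀ y ∈ Set.Ico (0:ℝ) 1, HasDerivAt f (f' y) y)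
    (h0 : f 0 = 0) (hpos : ∀ y ∈ Set.Ioo (0:ℝ) 1, 0 < f' y) :
    ∀ y ∈ Set.Ioo (0:ℝ) 1, 0 < f y := by
  have mono : StrictMonoOn f (Set.Ico 0 1) := by
    apply strictMonoOn_of_deriv_pos (convex_Ico 0 1)
    · exact fun x hx => (hd x hx).continuousAt.continuousWithinAt
    · intro x hx
      rw [interior_Ico] at hx
      rw [(hd x ⟨hx.1.le, hx.2⟩).deriv]
      exact hpos x hx
  intro y hy
  have := mono (Set.left_mem_Ico.mpr one_pos) ⟨hy.1.le, hy.2⟩ hy.1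
  rwa [h0] at this

lemma PhiA_pos : ∀ y ∈ Set.Ioo (0:ℝ) 1, 0 < PhiA y := by
  apply pos_on_Ioo
  · exact fun y hy => hasDerivAt_PhiA (by linarith [hy.1]) hy.2
  · simp [PhiA, PhiL]
  · intro y hy
    have h1 : (0:ℝ) < 1 - y ^ 2 := by nlinarith [hy.1, hy.2]
    have h2 : (0:ℝ) < 2 * y ^ 2 := by nlinarith [hy.1]
    exact div_pos h2 h1

lemma PhiG_pos : ∀ y ∈ Set.Ioo (0:ℝ) 1, 0 < PhiG y := by
  apply pos_on_Ioo
  · exact fun y hy => hasDerivAt_PhiG (by linarith [hy.1]) hy.2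
  · simp [PhiG, PhiL]
  · intro y hy
    have hA := PhiA_pos y hy
    simp only [PhiA] at hA
    have hy0 := hy.1
    have hl : 0 < PhiL y := by linarith
    nlinarith [mul_pos hy0 hA, mul_nonneg hy0.le (mul_nonneg (sq_nonneg y) hl.le)]

lemma PhiF_pos : ∀ y ∈ Set.Ioo (0:ℝ) 1, 0 < PhiF y := by
  apply pos_on_Ioo
  · exact fun y hy => hasDerivAt_PhiF (by linarith [hy.1]) hy.2
  · simp [PhiF, PhiL]
  · intro y hy
    have hG := PhiG_pos y hy
    have h1 : (0:ℝ) < (1 - y ^ 2) ^ 2 := pow_pos (by nlinarith [hy.1, hy.2]) 2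
    exact div_pos hG h1

/-- The function `Φ` is monotonically increasing on the interval `(0,1)`. -/
theorem Phi_strictMonoOn : StrictMonoOn Phi (Set.Ioo 0 1) := by
  have key : ∀ y ∈ Set.Ioo (0:ℝ) 1, 0 < PhiL y ∧ PhiL y ≠ 0 := by
    intro y hy
    have hA := PhiA_pos y hy
    simp only [PhiA] at hA
    constructor
    · nlinarith [hy.1]
    · nlinarith [hy.1]
  apply strictMonoOn_of_deriv_pos (convex_Ioo 0 1)
  · intro x hx
    exact (hasDerivAt_Phi hx.1 hx.2 (key x hx).2).continuousAt.continuousWithinAt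
  · intro x hx
    rw [interior_Ioo] at hx
    rw [(hasDerivAt_Phi hx.1 hx.2 (key x hx).2).deriv]
    have hF := PhiF_pos x hx
    have hx3 : (0:ℝ) < x ^ 3 := pow_pos hx.1 3
    have hl2 : (0:ℝ) < PhiL x ^ 2 := pow_pos (key x hx).1 2
    exact div_pos (by linarith) (mul_pos hx3 hl2)
end

section
/- For every y ∈ (0,1) one has 0 < Φ(y) < 1, where Φ(y) = y⁻²(1 − 2y/(log(1+y) − log(1−y))). Consequently, for every λ > 0, every v ∈ ℝ³ with 0 < |v| < 1 and every k ∈ {1,2,3}, the coefficient b_k[v] = λ (v_k/|v|²)(1 − 2|v|/(log(1+|v|) − log(1−|v|))) satisfies |b_k[v]| < λ. -/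
/-- `b_k[v] = λ (v_k/|v|²)(1 − 2|v|/(log(1+|v|) − log(1−|v|)))`. -/
noncomputable def bcoef (lam : ℝ) (v : EuclideanSpace ℝ (Fin 3)) (k : Fin 3) : ℝ :=
  lam * (v k / ‖v‖ ^ 2) * (1 - 2 * ‖v‖ / (Real.log (1 + ‖v‖) - Real.log (1 - ‖v‖)))

private lemma hasDerivAt_L (y : ℝ) (hy0 : -1 < y) (hy1 : y < 1) :
    HasDerivAt (fun x => Real.log (1 + x) - Real.log (1 - x)) (1 / (1 + y) + 1 / (1 - y)) y := by
  have h1 : HasDerivAt (fun x : ℝ => Real.log (1 + x)) (1 / (1 + y)) y := by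
    have := (Real.hasDerivAt_log (by linarith : (1:ℝ) + y ≠ 0)).comp y
      ((hasDerivAt_id y).const_add 1)
    simpa [one_div, Function.comp_def] using this
  have h2 : HasDerivAt (fun x : ℝ => Real.log (1 - x)) (-(1 / (1 - y))) y := by
    have := (Real.hasDerivAt_log (by linarith : (1:ℝ) - y ≠ 0)).comp y
      ((hasDerivAt_id y).const_sub 1)
    simpa [one_div, Function.comp_def] using this
  simpa [Pi.sub_def] using h1.sub h2

/-- Lower bound: `2y < log(1+y) - log(1-y)` for `y ∈ (0,1)`. -/
private lemma L_gt {y : ℝ} (hy : y ∈ Set.Ioo (0:ℝ) 1) :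
    2 * y < Real.log (1 + y) - Real.log (1 - y) := by
  obtain ⟨hy0, hy1⟩ := hy
  set f : ℝ → ℝ := fun x => Real.log (1 + x) - Real.log (1 - x) - 2 * x with hf
  have hmono : StrictMonoOn f (Set.Icc 0 y) := by
    apply strictMonoOn_of_deriv_pos (convex_Icc 0 y)
    · apply ContinuousOn.sub (ContinuousOn.sub ?_ ?_) (by fun_prop)
      · exact Real.continuousOn_log.comp (by fun_prop)
          (fun x hx => by simp at hx ⊢; nlinarith [hx.1, hx.2])
      · exact Real.continuousOn_log.comp (by fun_prop)
          (fun x hx => by simp at hx ⊢; nlinarith [hx.1, hx.2])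
    · intro x hx
      rw [interior_Icc] at hx
      obtain ⟨hx0, hx1⟩ := hx
      have hx1' : x < 1 := lt_trans hx1 hy1
      have hm : HasDerivAt (fun x : ℝ => 2 * x) 2 x := by
        simpa using (hasDerivAt_id x).const_mul 2
      have hd : HasDerivAt f (1 / (1 + x) + 1 / (1 - x) - 2) x :=
        (hasDerivAt_L x (by linarith) hx1').sub hm
      rw [hd.deriv]
      have h1 : (0:ℝ) < 1 + x := by linarith
      have h2 : (0:ℝ) < 1 - x := by linarith
      rw [div_add_div _ _ (ne_of_gt h1) (ne_of_gt h2)]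
      rw [sub_pos, lt_div_iff₀ (by positivity)]
      nlinarith
  have h0 : f 0 < f y := hmono (by constructor <;> simp [le_of_lt hy0]) ⟨le_of_lt hy0, le_refl y⟩ hy0
  simp only [hf] at h0
  norm_num at h0
  linarith

/-- Upper bound: `log(1+y) - log(1-y) < 2y/(1-y²)` for `y ∈ (0,1)`. -/
private lemma L_lt {y : ℝ} (hy : y ∈ Set.Ioo (0:ℝ) 1) :
    Real.log (1 + y) - Real.log (1 - y) < 2 * y / (1 - y ^ 2) := by
  obtain ⟨hy0, hy1⟩ := hy
  set g : ℝ → ℝ := fun x => 2 * x / (1 - x ^ 2) - (Real.log (1 + x) - Real.log (1 - x)) with hg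
  have hmono : StrictMonoOn g (Set.Icc 0 y) := by
    apply strictMonoOn_of_deriv_pos (convex_Icc 0 y)
    · apply ContinuousOn.sub
      · apply ContinuousOn.div (by fun_prop) (by fun_prop)
        intro x hx; simp at hx; nlinarith [hx.1, hx.2]
      · apply ContinuousOn.sub
        · exact Real.continuousOn_log.comp (by fun_prop)
            (fun x hx => by simp at hx ⊢; nlinarith [hx.1, hx.2])
        · exact Real.continuousOn_log.comp (by fun_prop)
            (fun x hx => by simp at hx ⊢; nlinarith [hx.1, hx.2])
    · intro x hx
      rw [interior_Icc] at hx
      obtain ⟨hx0, hx1⟩ := hx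
      have hx1' : x < 1 := lt_trans hx1 hy1
      have hden : (0:ℝ) < 1 - x ^ 2 := by nlinarith
      have hd1 : HasDerivAt (fun x : ℝ => 2 * x / (1 - x ^ 2))
          ((2 * (1 - x ^ 2) - 2 * x * (-(2 * x))) / (1 - x ^ 2) ^ 2) x := by
        exact HasDerivAt.div ((hasDerivAt_id x).const_mul 2)
          (((hasDerivAt_pow 2 x).const_sub 1)) (ne_of_gt hden) |>.congr_deriv (by
            simp only [id_eq]; ring)
      have hd : HasDerivAt g
          ((2 * (1 - x ^ 2) - 2 * x * (-(2 * x))) / (1 - x ^ 2) ^ 2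
            - (1 / (1 + x) + 1 / (1 - x))) x :=
        hd1.sub (hasDerivAt_L x (by linarith) hx1')
      rw [hd.deriv]
      have h1 : (0:ℝ) < 1 + x := by linarith
      have h2 : (0:ℝ) < 1 - x := by linarith
      have key : 1 / (1 + x) + 1 / (1 - x) = 2 / (1 - x ^ 2) := by
        rw [div_add_div _ _ (ne_of_gt h1) (ne_of_gt h2)]
        rw [div_eq_div_iff (by positivity) (by positivity)]
        ring
      rw [key, sub_pos, div_lt_div_iff₀ hden (by positivity)]
      nlinarith [mul_pos (mul_pos hx0 hx0) hden]
  have h0 : g 0 < g y := hmono (by constructor <;> simp [le_of_lt hy0])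
    ⟨le_of_lt hy0, le_refl y⟩ hy0
  simp only [hg] at h0
  norm_num at h0
  linarith

private lemma Phi_mem {y : ℝ} (hy : y ∈ Set.Ioo (0:ℝ) 1) : 0 < Phi y ∧ Phi y < 1 := by
  obtain ⟨hy0, hy1⟩ := hy
  set L := Real.log (1 + y) - Real.log (1 - y) with hL
  have hLgt : 2 * y < L := L_gt ⟨hy0, hy1⟩
  have hLlt : L < 2 * y / (1 - y ^ 2) := L_lt ⟨hy0, hy1⟩
  have hLpos : 0 < L := by linarith
  have hden : (0:ℝ) < 1 - y ^ 2 := by nlinarith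
  have h1 : 2 * y / L < 1 := by rw [div_lt_one hLpos]; linarith
  have h2 : 1 - y ^ 2 < 2 * y / L := by
    rw [lt_div_iff₀ hLpos]
    calc (1 - y ^ 2) * L < (1 - y ^ 2) * (2 * y / (1 - y ^ 2)) := by
          exact mul_lt_mul_of_pos_left hLlt hden
      _ = 2 * y := by field_simp
  constructor
  · unfold Phi
    rw [← hL]
    apply mul_pos (by positivity)
    linarith
  · unfold Phi
    rw [← hL]
    rw [div_mul_eq_mul_div, div_lt_one (by positivity), one_mul]
    linarith

/-- For every `y ∈ (0,1)` one has `0 < Φ(y) < 1`; consequently, for every `λ > 0`,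
every `v ∈ ℝ³` with `0 < |v| < 1` and every `k`, the coefficient `b_k[v]`
satisfies `|b_k[v]| < λ`. -/
theorem Phi_bounds_and_bcoef_lt :
    (∀ y ∈ Set.Ioo (0 : ℝ) 1, 0 < Phi y ∧ Phi y < 1) ∧
    (∀ lam : ℝ, 0 < lam → ∀ v : EuclideanSpace ℝ (Fin 3), 0 < ‖v‖ → ‖v‖ < 1 →
      ∀ k : Fin 3, |bcoef lam v k| < lam) := by
  refine ⟨fun y hy => Phi_mem hy, fun lam hlam v hv0 hv1 k => ?_⟩
  obtain ⟨hP0, hP1⟩ := Phi_mem ⟨hv0, hv1⟩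
  have hvk : |v k| ≤ ‖v‖ := by
    have h : Real.sqrt ((v k) ^ 2) ≤ Real.sqrt (∑ i, ‖v i‖ ^ 2) := by
      apply Real.sqrt_le_sqrt
      have := Finset.single_le_sum (f := fun i => ‖v i‖ ^ 2)
        (fun i _ => by positivity) (Finset.mem_univ k)
      simpa [sq_abs] using this
    rw [Real.sqrt_sq_eq_abs] at h
    rwa [EuclideanSpace.norm_eq]
  have hb : bcoef lam v k = lam * v k * Phi ‖v‖ := by
    unfold bcoef Phi; ring
  rw [hb, abs_mul, abs_mul, abs_of_pos hlam, abs_of_pos hP0]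
  calc lam * |v k| * Phi ‖v‖ ≤ lam * ‖v‖ * Phi ‖v‖ := by
        apply mul_le_mul_of_nonneg_right (mul_le_mul_of_nonneg_left hvk (le_of_lt hlam))
          (le_of_lt hP0)
    _ < lam * 1 := by
        rw [mul_assoc]
        apply mul_lt_mul_of_pos_left _ hlam
        nlinarith
    _ = lam := mul_one lam
end

section
/- Let ζ ∈ (−1,1), let ω ∈ ℝ³ with |ω| = 1, and set P = σ₀ + ζ ω·σ (a Hermitian positive definite 2×2 complex matrix), where ω·σ = ω₁σ₁ + ω₂σ₂ + ω₃σ₃. Let P^{1/2} denote the unique positive definite square root of P, and P^{−1/2} its inverse. Then for all a₀ ∈ ℝ and a ∈ ℝ³: P^{−1/2}(a₀σ₀ + a·σ)P^{−1/2} = (1−ζ²)^{−1}(a₀ − ζ ω·a) σ₀ + (1−ζ²)^{−1} [−ζ a₀ ω + (ω⊗ω + √(1−ζ²)(I − ω⊗ω)) a]·σ, where I is the 3×3 identity matrix and (ω⊗ω)a = (ω·a)ω. -/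
open Matrix
open scoped ComplexOrder

noncomputable def pauli : Fin 3 → Matrix (Fin 2) (Fin 2) ℂ
  | 0 => !![0, 1; 1, 0]
  | 1 => !![0, -Complex.I; Complex.I, 0]
  | 2 => !![1, 0; 0, -1]

noncomputable def dotSigma (b : Fin 3 → ℝ) : Matrix (Fin 2) (Fin 2) ℂ :=
  ∑ i, (b i : ℂ) • pauli i

lemma dotSigma_eq (b : Fin 3 → ℝ) :
    dotSigma b = !![(b 2 : ℂ), (b 0 : ℂ) - (b 1 : ℂ) * Complex.I;
                    (b 0 : ℂ) + (b 1 : ℂ) * Complex.I, -(b 2 : ℂ)] := by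
  ext i j
  fin_cases i <;> fin_cases j <;>
    simp [dotSigma, pauli, Fin.sum_univ_three] <;> ring

lemma sandwich_expand (α c₀ : ℝ) (b f : Fin 3 → ℝ) :
    ((α : ℂ) • (1 : Matrix (Fin 2) (Fin 2) ℂ) + dotSigma b) *
        (((c₀ : ℂ)) • (1 : Matrix (Fin 2) (Fin 2) ℂ) + dotSigma f) *
        ((α : ℂ) • (1 : Matrix (Fin 2) (Fin 2) ℂ) + dotSigma b)
      = ((α ^ 2 * c₀ + 2 * α * (∑ i, b i * f i) + c₀ * (∑ i, b i ^ 2) : ℝ) : ℂ) •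
          (1 : Matrix (Fin 2) (Fin 2) ℂ)
        + dotSigma (fun j =>
            (2 * α * c₀ + 2 * (∑ i, b i * f i)) * b j + (α ^ 2 - ∑ i, b i ^ 2) * f j) := by
  rw [dotSigma_eq, dotSigma_eq, dotSigma_eq]
  ext i j
  fin_cases i <;> fin_cases j <;>
    · simp [Matrix.mul_apply, Fin.sum_univ_two, Fin.sum_univ_three, Matrix.one_apply]
      push_cast
      ring_nf
      try simp only [pow_three, pow_two, Complex.I_mul_I, Complex.I_sq]
      ring

lemma cs3 (w1 w2 w3 v1 v2 v3 : ℝ) :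
    (w1 * v1 + w2 * v2 + w3 * v3) ^ 2
      ≤ (w1 ^ 2 + w2 ^ 2 + w3 ^ 2) * (v1 ^ 2 + v2 ^ 2 + v3 ^ 2) := by
  nlinarith [sq_nonneg (w1 * v2 - w2 * v1), sq_nonneg (w1 * v3 - w3 * v1),
    sq_nonneg (w2 * v3 - w3 * v2)]

lemma pos_final (α β T F : ℝ) (hα : 0 < α) (hβ : β ^ 2 < α ^ 2) (hT : 0 < T)
    (hF2 : F ^ 2 ≤ T ^ 2) : 0 < α * T + β * F := by
  nlinarith [mul_pos hα hT, mul_le_mul_of_nonneg_left hF2 (sq_nonneg β),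
    mul_lt_mul_of_pos_right hβ (pow_pos hT 2)]

lemma quad_pos (α β w1 w2 w3 p q r s : ℝ) (hα : 0 < α) (hβ : β ^ 2 < α ^ 2)
    (hw : w1 ^ 2 + w2 ^ 2 + w3 ^ 2 = 1) (hx : 0 < p ^ 2 + q ^ 2 + r ^ 2 + s ^ 2) :
    0 < α * (p ^ 2 + q ^ 2 + r ^ 2 + s ^ 2)
      + β * (w3 * (p ^ 2 + q ^ 2 - r ^ 2 - s ^ 2) + 2 * w1 * (p * r + q * s)
          + 2 * w2 * (p * s - q * r)) := by
  have key := cs3 w1 w2 w3 (2 * (p * r + q * s)) (2 * (p * s - q * r))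
      (p ^ 2 + q ^ 2 - r ^ 2 - s ^ 2)
  rw [hw, one_mul] at key
  have hid : (2 * (p * r + q * s)) ^ 2 + (2 * (p * s - q * r)) ^ 2
      + (p ^ 2 + q ^ 2 - r ^ 2 - s ^ 2) ^ 2 = (p ^ 2 + q ^ 2 + r ^ 2 + s ^ 2) ^ 2 := by ring
  rw [hid] at key
  have := pos_final α β (p ^ 2 + q ^ 2 + r ^ 2 + s ^ 2)
      (w3 * (p ^ 2 + q ^ 2 - r ^ 2 - s ^ 2) + 2 * w1 * (p * r + q * s)
        + 2 * w2 * (p * s - q * r)) hα hβ hx (by nlinarith [key])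
  linarith [this]

lemma posdef_aux (α β : ℝ) (ω : Fin 3 → ℝ) (hω : ∑ i, (ω i) ^ 2 = 1)
    (hα : 0 < α) (hβ : β ^ 2 < α ^ 2) :
    ((α : ℂ) • (1 : Matrix (Fin 2) (Fin 2) ℂ) + dotSigma (fun i => β * ω i)).PosDef := by
  rw [dotSigma_eq]
  refine Matrix.PosDef.of_dotProduct_mulVec_pos ?_ ?_
  · rw [Matrix.IsHermitian]
    ext i j
    fin_cases i <;> fin_cases j <;>
      simp [Matrix.conjTranspose_apply, Matrix.one_apply, Complex.ext_iff]
  · intro x hx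
    have hω3 : (ω 0) ^ 2 + (ω 1) ^ 2 + (ω 2) ^ 2 = 1 := by
      rw [← hω, Fin.sum_univ_three]
    have hx2 : 0 < (x 0).re ^ 2 + (x 0).im ^ 2 + (x 1).re ^ 2 + (x 1).im ^ 2 := by
      rcases (by
        by_contra h
        push_neg at h
        exact hx (funext fun i => by fin_cases i <;> simp [h.1, h.2]) : x 0 ≠ 0 ∨ x 1 ≠ 0) with h | h
      · have := Complex.normSq_pos.mpr h
        rw [Complex.normSq_apply] at this
        nlinarith [sq_nonneg (x 1).re, sq_nonneg (x 1).im]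
      · have := Complex.normSq_pos.mpr h
        rw [Complex.normSq_apply] at this
        nlinarith [sq_nonneg (x 0).re, sq_nonneg (x 0).im]
    have key := quad_pos α β (ω 0) (ω 1) (ω 2) (x 0).re (x 0).im (x 1).re (x 1).im
      hα hβ hω3 hx2
    have : dotProduct (star x) ((((α : ℂ) • (1 : Matrix (Fin 2) (Fin 2) ℂ)
          + !![((β * ω 2 : ℝ) : ℂ), ((β * ω 0 : ℝ) : ℂ) - ((β * ω 1 : ℝ) : ℂ) * Complex.I;
              ((β * ω 0 : ℝ) : ℂ) + ((β * ω 1 : ℝ) : ℂ) * Complex.I, -((β * ω 2 : ℝ) : ℂ)]) )*ᵥ x)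
        = ((α * ((x 0).re ^ 2 + (x 0).im ^ 2 + (x 1).re ^ 2 + (x 1).im ^ 2)
            + β * (ω 2 * ((x 0).re ^ 2 + (x 0).im ^ 2 - (x 1).re ^ 2 - (x 1).im ^ 2)
              + 2 * ω 0 * ((x 0).re * (x 1).re + (x 0).im * (x 1).im)
              + 2 * ω 1 * ((x 0).re * (x 1).im - (x 0).im * (x 1).re)) : ℝ) : ℂ) := by
      simp [dotProduct, Matrix.mulVec, Fin.sum_univ_two, Matrix.one_apply, Complex.ext_iff,
        Complex.mul_re, Complex.mul_im, Complex.add_re, Complex.add_im,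
        Complex.ofReal_re, Complex.ofReal_im, Complex.ofReal_pow, pow_two]
      constructor <;> ring
    rw [this]
    exact Complex.zero_lt_real.mpr key

lemma Matrix.PosSemidef.eq_of_sq_eq_sq {A B : Matrix (Fin 2) (Fin 2) ℂ} (hA : A.PosSemidef)
    (hB : B.PosSemidef) (h : A ^ 2 = B ^ 2) : A = B := by
  open scoped MatrixOrder in
  exact (CFC.sq_eq_sq_iff A B hA.nonneg hB.nonneg).mp h

lemma smul_comb (k x₀ : ℝ) (g : Fin 3 → ℝ) :
    ((k : ℝ) : ℂ) • (((x₀ : ℝ) : ℂ) • (1 : Matrix (Fin 2) (Fin 2) ℂ) + dotSigma g)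
      = ((k * x₀ : ℝ) : ℂ) • (1 : Matrix (Fin 2) (Fin 2) ℂ)
        + dotSigma (fun j => k * g j) := by
  rw [dotSigma_eq, dotSigma_eq]
  ext i j
  fin_cases i <;> fin_cases j <;> (try simp [Matrix.one_apply]) <;> (try push_cast) <;>
    (try ring)

lemma one_comb : ((1 : ℝ) : ℂ) • (1 : Matrix (Fin 2) (Fin 2) ℂ)
    + dotSigma (fun _ => (0 : ℝ)) = 1 := by
  rw [dotSigma_eq]
  ext i j
  fin_cases i <;> fin_cases j <;> simp [Matrix.one_apply]

/-- For `ζ ∈ (−1,1)` and `ω ∈ ℝ³` with `|ω| = 1`, the polarization matrix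
`P = σ₀ + ζ ω·σ` is Hermitian positive definite, it has a unique positive definite
square root `P^{1/2}`, and for every such square root `R = P^{1/2}` and all `a₀ ∈ ℝ`,
`a ∈ ℝ³`:
`P^{−1/2}(a₀σ₀ + a·σ)P^{−1/2} = (1−ζ²)⁻¹(a₀ − ζ ω·a) σ₀
  + (1−ζ²)⁻¹ [−ζ a₀ ω + (ω⊗ω + √(1−ζ²)(I − ω⊗ω)) a]·σ`. -/
theorem sandwich_inv_sqrt_polarization (ζ : ℝ) (hζ : ζ ∈ Set.Ioo (-1 : ℝ) 1)
    (ω : Fin 3 → ℝ) (hω : ∑ i, (ω i) ^ 2 = 1) :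
    ((1 : Matrix (Fin 2) (Fin 2) ℂ) + dotSigma (fun i => ζ * ω i)).PosDef ∧
    (∃! R : Matrix (Fin 2) (Fin 2) ℂ,
      R.PosDef ∧ R * R = (1 : Matrix (Fin 2) (Fin 2) ℂ) + dotSigma (fun i => ζ * ω i)) ∧
    (∀ R : Matrix (Fin 2) (Fin 2) ℂ,
      R.PosDef → R * R = (1 : Matrix (Fin 2) (Fin 2) ℂ) + dotSigma (fun i => ζ * ω i) →
      ∀ (a₀ : ℝ) (a : Fin 3 → ℝ),
        R⁻¹ * (((a₀ : ℂ) • (1 : Matrix (Fin 2) (Fin 2) ℂ)) + dotSigma a) * R⁻¹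
          = ((1 - ζ ^ 2)⁻¹ : ℝ) •
              ((((a₀ - ζ * ∑ i, ω i * a i : ℝ) : ℂ) • (1 : Matrix (Fin 2) (Fin 2) ℂ))
                + dotSigma (fun j =>
                    -(ζ * a₀) * ω j + (∑ i, ω i * a i) * ω j
                      + Real.sqrt (1 - ζ ^ 2) * (a j - (∑ i, ω i * a i) * ω j)))) := by
  obtain ⟨hζ1, hζ2⟩ := hζ
  have h1p : (0 : ℝ) < 1 + ζ := by linarith
  have h1m : (0 : ℝ) < 1 - ζ := by linarith
  set u := Real.sqrt (1 + ζ) with hu_def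
  set v := Real.sqrt (1 - ζ) with hv_def
  have hu2 : u ^ 2 = 1 + ζ := Real.sq_sqrt h1p.le
  have hv2 : v ^ 2 = 1 - ζ := Real.sq_sqrt h1m.le
  have hu0 : 0 < u := Real.sqrt_pos.mpr h1p
  have hv0 : 0 < v := Real.sqrt_pos.mpr h1m
  have hζuv : ζ = (u ^ 2 - v ^ 2) / 2 := by rw [hu2, hv2]; ring
  have hwuv : Real.sqrt (1 - ζ ^ 2) = u * v := by
    rw [show (1 : ℝ) - ζ ^ 2 = (1 + ζ) * (1 - ζ) by ring, hu_def, hv_def,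
      Real.sqrt_mul h1p.le]
  have h12 : (1 : ℝ) - ζ ^ 2 = u ^ 2 * v ^ 2 := by rw [hu2, hv2]; ring
  have hcon : u ^ 2 + v ^ 2 = 2 := by rw [hu2, hv2]; ring
  set α := (u + v) / 2 with hα_def
  set β := (u - v) / 2 with hβ_def
  have hα0 : 0 < α := by rw [hα_def]; positivity
  have hβα : β ^ 2 < α ^ 2 := by
    rw [hα_def, hβ_def]
    nlinarith [mul_pos hu0 hv0]
  have hω3 : ω 0 ^ 2 + ω 1 ^ 2 + ω 2 ^ 2 = 1 := by rw [← hω, Fin.sum_univ_three]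
  set R₀ := (α : ℂ) • (1 : Matrix (Fin 2) (Fin 2) ℂ) + dotSigma (fun i => β * ω i)
    with hR₀_def
  have hR₀pos : R₀.PosDef := posdef_aux α β ω hω hα0 hβα
  have hsum_b2 : ∑ i, (β * ω i) ^ 2 = β ^ 2 := by
    simp only [mul_pow, ← Finset.mul_sum, hω, mul_one]
  have hR₀sq : R₀ * R₀ = 1 + dotSigma fun i => ζ * ω i := by
    have h := sandwich_expand α 1 (fun i => β * ω i) (fun _ => 0)
    rw [one_comb, Matrix.mul_one] at h
    rw [hR₀_def, h, hsum_b2]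
    refine congrArg₂ (· + ·) ?_ (congrArg dotSigma (funext fun j => ?_))
    · rw [show (α ^ 2 * 1 + 2 * α * (∑ i, β * ω i * 0) + 1 * β ^ 2 : ℝ)
          = (1:ℝ) by simp; rw [hα_def, hβ_def]; nlinarith [hcon]]
      simp
    · simp only [mul_zero, Finset.sum_const_zero, mul_one, add_zero, mul_zero]
      rw [hζuv, hα_def, hβ_def]
      ring
  have hPpos : ((1 : Matrix (Fin 2) (Fin 2) ℂ) + dotSigma fun i => ζ * ω i).PosDef := by
    have h := posdef_aux 1 ζ ω hω one_pos (by nlinarith)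
    simpa using h
  refine ⟨hPpos, ⟨R₀, ⟨hR₀pos, hR₀sq⟩, fun S hS =>
    hS.1.posSemidef.eq_of_sq_eq_sq hR₀pos.posSemidef
      (by rw [pow_two, pow_two, hS.2, hR₀sq])⟩, ?_⟩
  intro R hR hRsq a₀ a
  have hReq : R = R₀ := hR.posSemidef.eq_of_sq_eq_sq hR₀pos.posSemidef
    (by rw [pow_two, pow_two, hRsq, hR₀sq])
  set s := ∑ i, ω i * a i with hs_def
  set f : Fin 3 → ℝ := fun j =>
      -(ζ * a₀) * ω j + s * ω j + Real.sqrt (1 - ζ ^ 2) * (a j - s * ω j) with hf_def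
  set k : ℝ := (1 - ζ ^ 2)⁻¹ with hk_def
  have hbf : ∑ i, (β * ω i) * f i = β * (s - ζ * a₀) := by
    calc ∑ i, (β * ω i) * f i
        = ∑ i, (β * (-(ζ * a₀) + s - (u * v) * s) * (ω i) ^ 2
            + β * (u * v) * (ω i * a i)) := by
          refine Finset.sum_congr rfl fun i _ => ?_
          simp only [hf_def, hwuv]; ring
      _ = β * (-(ζ * a₀) + s - (u * v) * s) * (∑ i, (ω i) ^ 2)
            + β * (u * v) * (∑ i, ω i * a i) := by
          rw [Finset.sum_add_distrib, ← Finset.mul_sum, ← Finset.mul_sum]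
      _ = β * (s - ζ * a₀) := by rw [hω, ← hs_def]; ring
  have h1z2 : (0:ℝ) < 1 - ζ ^ 2 := by
    rw [show (1:ℝ) - ζ^2 = (1+ζ)*(1-ζ) by ring]; exact mul_pos h1p h1m
  have hne : (1 : ℝ) - ζ ^ 2 ≠ 0 := ne_of_gt h1z2
  have hsmul : ∀ (r : ℝ) (M : Matrix (Fin 2) (Fin 2) ℂ), r • M = ((r : ℝ) : ℂ) • M :=
    fun r M => by ext i j; simp [Matrix.smul_apply, Complex.real_smul]
  have hkey : R₀ * (((k : ℝ) : ℂ) • (((a₀ - ζ * s : ℝ) : ℂ) • (1 : Matrix (Fin 2) (Fin 2) ℂ)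
        + dotSigma f)) * R₀
      = ((a₀ : ℂ) • (1 : Matrix (Fin 2) (Fin 2) ℂ)) + dotSigma a := by
    rw [Matrix.mul_smul, Matrix.smul_mul]
    rw [hR₀_def, sandwich_expand α (a₀ - ζ * s) (fun i => β * ω i) f]
    rw [show (∑ i, (β * ω i) * f i) = β * (s - ζ * a₀) from hbf, hsum_b2]
    have hA : k * (α ^ 2 * (a₀ - ζ * s) + 2 * α * (β * (s - ζ * a₀))
        + (a₀ - ζ * s) * β ^ 2) = a₀ := by
      rw [hk_def, inv_mul_eq_iff_eq_mul₀ hne]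
      rw [hα_def, hβ_def, hζuv]
      linear_combination ((a₀ - (u ^ 2 - v ^ 2) / 2 * s) / 2) * hcon
    have hB : ∀ j, k * ((2 * α * (a₀ - ζ * s) + 2 * (β * (s - ζ * a₀))) * (β * ω j)
        + (α ^ 2 - β ^ 2) * f j) = a j := by
      intro j
      rw [hk_def, inv_mul_eq_iff_eq_mul₀ hne]
      simp only [hf_def]
      rw [hwuv, hα_def, hβ_def, hζuv]
      linear_combination ((u ^ 2 + v ^ 2 + 2) / 4 * a j
        - ((u ^ 2 - v ^ 2) / 4 * a₀ + (u ^ 2 + v ^ 2) / 4 * s) * ω j) * hcon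
    rw [smul_comb, hA, funext hB]
  rw [hReq, hsmul, ← hkey]
  have hdet : IsUnit R₀.det := isUnit_iff_ne_zero.mpr hR₀pos.det_pos.ne'
  simp only [Matrix.mul_assoc]
  rw [Matrix.mul_nonsing_inv _ hdet, Matrix.mul_one, ← Matrix.mul_assoc,
    Matrix.nonsing_inv_mul _ hdet, Matrix.one_mul]
end

section
/- Let Ω ⊂ ℝ² be a bounded open set, T > 0, λ_D > 0, and let C : Ω̄ → ℝ be continuous with C ≥ 0. Suppose n₀, V : Ω̄ × [0,T] → ℝ are continuous, C² in x and C¹ in t on Ω × (0,T], and satisfy pointwise in Ω × (0,T] the drift-diffusion–Poisson system ∂_t n₀ = div(∇n₀ + n₀∇V) and −λ_D² ΔV = n₀ − C. Set M = max{ sup_{∂Ω×[0,T]} n₀, sup_Ω n₀(·,0), sup_Ω C }. Then n₀ ≤ M on Ω × [0,T]. -/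
open Real Set

/-- Spatial partial derivative `∂_k` on `ℝ²` of a scalar field, with the
convention `∂₃ = 0` (the index `k = 2`, i.e. the third one, gives `0`). -/
noncomputable def pd (k : Fin 3) (f : (Fin 2 → ℝ) → ℝ) (x : Fin 2 → ℝ) : ℝ :=
  fderiv ℝ f x (fun s : Fin 2 => if (s : ℕ) = (k : ℕ) then 1 else 0)

/-- `curl v = (∂₂v₃, −∂₁v₃, ∂₁v₂ − ∂₂v₁)` of a 3-component field on `ℝ²`. -/
noncomputable def curl3 (v : (Fin 2 → ℝ) → Fin 3 → ℝ) (x : Fin 2 → ℝ) : Fin 3 → ℝ :=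
  ![pd 1 (fun y => v y 2) x, -(pd 0 (fun y => v y 2) x),
    pd 0 (fun y => v y 1) x - pd 1 (fun y => v y 0) x]

/-- `G[v] = ‖∇v‖² + 2 v·curl v + 2|v|²`. -/
noncomputable def Gfun (v : (Fin 2 → ℝ) → Fin 3 → ℝ) (x : Fin 2 → ℝ) : ℝ :=
  (∑ s : Fin 2, ∑ j : Fin 3, (pd s.castSucc (fun y => v y j) x) ^ 2)
    + 2 * ∑ j : Fin 3, v x j * curl3 v x j
    + 2 * ∑ j : Fin 3, (v x j) ^ 2

/-- The gradient `∇f = (∂₁f, ∂₂f)` of a scalar field on `ℝ²`. -/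
noncomputable def grad (f : (Fin 2 → ℝ) → ℝ) (x : Fin 2 → ℝ) : Fin 2 → ℝ :=
  fun s => pd s.castSucc f x

/-- Euclidean dot product on `ℝ²`. -/
def dot2 (a b : Fin 2 → ℝ) : ℝ := ∑ s : Fin 2, a s * b s

open Filter Topology

/-- Standard basis vector of `ℝ²`. -/
noncomputable def ee (s : Fin 2) : Fin 2 → ℝ :=
  fun j : Fin 2 => if (j : ℕ) = (s : ℕ) then 1 else 0

lemma pd_castSucc (s : Fin 2) (f : (Fin 2 → ℝ) → ℝ) (x : Fin 2 → ℝ) :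
    pd s.castSucc f x = fderiv ℝ f x (ee s) := rfl

/-- At a right-endpoint (or interior) maximum on `[0,t₀]` the derivative is nonnegative. -/
lemma deriv_nonneg_of_max {u : ℝ → ℝ} {d t₀ : ℝ} (hder : HasDerivAt u d t₀)
    (ht₀ : 0 < t₀) (hmax : ∀ τ ∈ Set.Icc (0:ℝ) t₀, u τ ≤ u t₀) : 0 ≤ d := by
  have hs : Tendsto (slope u t₀) (𝓝[≠] t₀) (𝓝 d) :=
    hasDerivAt_iff_tendsto_slope.mp hder
  have hs' : Tendsto (slope u t₀) (𝓝[<] t₀) (𝓝 d) :=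
    hs.mono_left (nhdsWithin_mono _ (fun x hx => ne_of_lt hx))
  refine ge_of_tendsto hs' ?_
  filter_upwards [self_mem_nhdsWithin,
    eventually_nhdsWithin_of_eventually_nhds (eventually_gt_nhds ht₀)] with t ht h0
  have ht' : t < t₀ := ht
  have h1 : u t ≤ u t₀ := hmax t ⟨le_of_lt h0, le_of_lt ht'⟩
  have h2 : slope u t₀ t = (u t - u t₀) / (t - t₀) := by
    simp [slope_def_field]
  rw [h2]
  exact div_nonneg_of_nonpos (by linarith) (by linarith)

/-- A directional evaluation of the derivative of a `C²` function is differentiable. -/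
lemma diffAt_pd {f : (Fin 2 → ℝ) → ℝ} {x₀ : Fin 2 → ℝ} (hf : ContDiffAt ℝ 2 f x₀)
    (v : Fin 2 → ℝ) : DifferentiableAt ℝ (fun y => fderiv ℝ f y v) x₀ := by
  have h1 : ContDiffAt ℝ 1 (fderiv ℝ f) x₀ := hf.fderiv_right (by norm_num)
  have h2 : ContDiffAt ℝ 1 (fun y => (ContinuousLinearMap.apply ℝ ℝ v) (fderiv ℝ f y)) x₀ :=
    (ContinuousLinearMap.apply ℝ ℝ v).contDiff.comp_contDiffAt x₀ h1
  exact h2.differentiableAt one_ne_zero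

/-- Second-order necessary condition: at an interior maximum, the pure second
directional derivatives are nonpositive. -/
lemma second_deriv_nonpos {Ω : Set (Fin 2 → ℝ)} (hΩo : IsOpen Ω) {f : (Fin 2 → ℝ) → ℝ}
    {x₀ v : Fin 2 → ℝ} (hx₀ : x₀ ∈ Ω)
    (hdiff : ∀ y ∈ Ω, DifferentiableAt ℝ f y)
    (hg : DifferentiableAt ℝ (fun y => fderiv ℝ f y v) x₀)
    (hmax : ∀ y ∈ Ω, f y ≤ f x₀) :
    fderiv ℝ (fun y => fderiv ℝ f y v) x₀ v ≤ 0 := by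
  set g : (Fin 2 → ℝ) → ℝ := fun y => fderiv ℝ f y v with hgdef
  by_contra hD
  push_neg at hD
  set D : ℝ := fderiv ℝ g x₀ v with hDdef
  set L : ℝ → (Fin 2 → ℝ) := fun r => x₀ + r • v with hLdef
  have hL0 : L 0 = x₀ := by simp [hLdef]
  have hL : ∀ r : ℝ, HasDerivAt L v r := by
    intro r
    have h1 : HasDerivAt (fun r : ℝ => r • v) ((1:ℝ) • v) r :=
      (hasDerivAt_id r).smul_const v
    simpa [hLdef, one_smul] using h1.const_add x₀
  have hLc : Continuous L := by
    apply continuous_const.add (continuous_id.smul continuous_const)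
  have hmemnhds : L ⁻¹' Ω ∈ 𝓝 (0:ℝ) :=
    hLc.continuousAt.preimage_mem_nhds (by rw [hL0]; exact hΩo.mem_nhds hx₀)
  obtain ⟨δ, hδ0, hδ⟩ := Metric.mem_nhds_iff.mp hmemnhds
  have hLΩ : ∀ r : ℝ, |r| < δ → L r ∈ Ω := by
    intro r hr
    exact hδ (by simpa [Real.dist_eq] using hr)
  have hφ' : ∀ r : ℝ, |r| < δ → HasDerivAt (fun s => f (L s)) (g (L r)) r := by
    intro r hr
    exact ((hdiff (L r) (hLΩ r hr)).hasFDerivAt).comp_hasDerivAt r (hL r)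
  have hφ'' : HasDerivAt (fun s => g (L s)) D 0 := by
    have hg' : HasFDerivAt g (fderiv ℝ g x₀) (L 0) := hL0 ▸ hg.hasFDerivAt
    exact hg'.comp_hasDerivAt 0 (hL 0)
  have hloc : IsLocalMax f x₀ := by
    filter_upwards [hΩo.mem_nhds hx₀] with y hy using hmax y hy
  have hg0 : g x₀ = 0 := by
    rw [hgdef]; simp only []
    rw [hloc.fderiv_eq_zero]
    rfl
  have hs : Tendsto (slope (fun s => g (L s)) 0) (𝓝[≠] (0:ℝ)) (𝓝 D) :=
    hasDerivAt_iff_tendsto_slope.mp hφ''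
  have hs' : Tendsto (slope (fun s => g (L s)) 0) (𝓝[>] (0:ℝ)) (𝓝 D) :=
    hs.mono_left (nhdsWithin_mono _ (fun x hx => ne_of_gt hx))
  have hev : ∀ᶠ t in 𝓝[>] (0:ℝ), 0 < g (L t) ∧ t < δ := by
    have h1 : ∀ᶠ t in 𝓝[>] (0:ℝ), 0 < slope (fun s => g (L s)) 0 t :=
      hs'.eventually (eventually_gt_nhds hD)
    have h2 : ∀ᶠ t in 𝓝[>] (0:ℝ), t < δ :=
      eventually_nhdsWithin_of_eventually_nhds (eventually_lt_nhds hδ0)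
    filter_upwards [h1, h2, self_mem_nhdsWithin] with t h1t h2t h3t
    refine ⟨?_, h2t⟩
    have h3t' : (0:ℝ) < t := h3t
    have heq : slope (fun s => g (L s)) 0 t = g (L t) / t := by
      simp [slope_def_field, hL0, hg0]
    rw [heq] at h1t
    have := mul_pos h1t h3t'
    calc (0:ℝ) < g (L t) / t * t := this
      _ = g (L t) := by field_simp
  obtain ⟨u, hu, husub⟩ := mem_nhdsGT_iff_exists_Ioo_subset.mp hev
  have hu0 : (0:ℝ) < u := hu
  set b : ℝ := min u δ / 2 with hbdef
  have hmin0 : 0 < min u δ := lt_min hu0 hδ0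
  have hb0 : 0 < b := by rw [hbdef]; linarith
  have hbu : b < u := by
    have h1 : min u δ ≤ u := min_le_left u δ
    rw [hbdef]; linarith
  have hbδ : b < δ := by
    have h1 : min u δ ≤ δ := min_le_right u δ
    rw [hbdef]; linarith
  have habs : ∀ r ∈ Set.Icc (0:ℝ) b, |r| < δ := by
    intro r hr
    rw [abs_lt]; constructor <;> [linarith [hr.1]; linarith [hr.2]]
  have hmono : StrictMonoOn (fun s => f (L s)) (Set.Icc 0 b) := by
    apply strictMonoOn_of_deriv_pos (convex_Icc 0 b)
    · intro r hr
      exact (hφ' r (habs r hr)).continuousAt.continuousWithinAt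
    · intro t ht
      rw [interior_Icc] at ht
      have htδ : |t| < δ := habs t ⟨ht.1.le, ht.2.le⟩
      rw [(hφ' t htδ).deriv]
      exact (husub ⟨ht.1, lt_trans ht.2 hbu⟩).1
  have hlt : f (L 0) < f (L b) :=
    hmono ⟨le_refl 0, hb0.le⟩ ⟨hb0.le, le_refl b⟩ hb0
  have hle : f (L b) ≤ f x₀ := hmax _ (hLΩ b (by rw [abs_of_pos hb0]; exact hbδ))
  rw [hL0] at hlt
  linarith

/-- Maximum principle for the drift-diffusion–Poisson system (upper bound of
Theorem 3.1): for a classical solution of `∂_t n₀ = div(∇n₀ + n₀∇V)`,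
`−λ_D² ΔV = n₀ − C` on `Ω × (0,T]` with `C ≥ 0`, one has `n₀ ≤ M` on
`Ω × [0,T]`, where
`M = max{sup_{∂Ω×[0,T]} n₀, sup_Ω n₀(·,0), sup_Ω C}`. -/
theorem n0_upper_bound (Ω : Set (Fin 2 → ℝ)) (hΩo : IsOpen Ω)
    (hΩb : Bornology.IsBounded Ω) (T : ℝ) (hT : 0 < T) (lD : ℝ) (hlD : 0 < lD)
    (C : (Fin 2 → ℝ) → ℝ) (hCc : ContinuousOn C (closure Ω))
    (hC0 : ∀ x ∈ closure Ω, 0 ≤ C x)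
    (n₀ V : ((Fin 2 → ℝ) × ℝ) → ℝ)
    (hc₀ : ContinuousOn n₀ (closure Ω ×ˢ Set.Icc 0 T))
    (hcV : ContinuousOn V (closure Ω ×ˢ Set.Icc 0 T))
    (hx₀ : ∀ t ∈ Set.Ioc (0 : ℝ) T, ContDiffOn ℝ 2 (fun x => n₀ (x, t)) Ω)
    (hxV : ∀ t ∈ Set.Ioc (0 : ℝ) T, ContDiffOn ℝ 2 (fun x => V (x, t)) Ω)
    (ht₀ : ∀ x ∈ Ω, ∀ t ∈ Set.Ioc (0 : ℝ) T, DifferentiableAt ℝ (fun τ => n₀ (x, τ)) t)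
    (hdd : ∀ x ∈ Ω, ∀ t ∈ Set.Ioc (0 : ℝ) T,
      deriv (fun τ => n₀ (x, τ)) t
        = ∑ s : Fin 2, pd s.castSucc (fun y =>
            pd s.castSucc (fun z => n₀ (z, t)) y
              + n₀ (y, t) * pd s.castSucc (fun z => V (z, t)) y) x)
    (hpois : ∀ x ∈ Ω, ∀ t ∈ Set.Ioc (0 : ℝ) T,
      -lD ^ 2 * (∑ s : Fin 2, pd s.castSucc (fun y => pd s.castSucc (fun z => V (z, t)) y) x)
        = n₀ (x, t) - C x) :
    ∀ x ∈ Ω, ∀ t ∈ Set.Icc (0 : ℝ) T,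
      n₀ (x, t) ≤ max (max
        (sSup (n₀ '' (frontier Ω ×ˢ Set.Icc (0 : ℝ) T)))
        (sSup ((fun x => n₀ (x, 0)) '' Ω)))
        (sSup (C '' Ω)) := by
  intro x hx t ht
  by_contra hcon
  push_neg at hcon
  set M := max (max
      (sSup (n₀ '' (frontier Ω ×ˢ Set.Icc (0 : ℝ) T)))
      (sSup ((fun x => n₀ (x, 0)) '' Ω)))
      (sSup (C '' Ω)) with hM
  -- compactness facts
  have hclb : Bornology.IsBounded (closure Ω) := hΩb.closure
  have hclc : IsCompact (closure Ω) := hΩb.isCompact_closure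
  have hKc : IsCompact (closure Ω ×ˢ Set.Icc (0:ℝ) T) := hclc.prod isCompact_Icc
  have hfrc : IsCompact (frontier Ω ×ˢ Set.Icc (0:ℝ) T) :=
    (Metric.isCompact_of_isClosed_isBounded isClosed_frontier
      (hclb.subset frontier_subset_closure)).prod isCompact_Icc
  have hsub1 : frontier Ω ×ˢ Set.Icc (0:ℝ) T ⊆ closure Ω ×ˢ Set.Icc (0:ℝ) T :=
    Set.prod_mono frontier_subset_closure (fun a ha => ha)
  have hbdd1 : BddAbove (n₀ '' (frontier Ω ×ˢ Set.Icc (0:ℝ) T)) :=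
    (hfrc.image_of_continuousOn (hc₀.mono hsub1)).bddAbove
  have hbdd2 : BddAbove ((fun x => n₀ (x, 0)) '' Ω) := by
    have h1 : ContinuousOn (fun x => n₀ (x, 0)) (closure Ω) := by
      exact hc₀.comp ((continuous_id.prodMk continuous_const).continuousOn)
        (fun y hy => ⟨hy, le_refl 0, hT.le⟩)
    exact BddAbove.mono (Set.image_mono subset_closure)
      (hclc.image_of_continuousOn h1).bddAbove
  have hbdd3 : BddAbove (C '' Ω) :=
    BddAbove.mono (Set.image_mono subset_closure)
      (hclc.image_of_continuousOn hCc).bddAbove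
  -- bounds M
  have hS1M : sSup (n₀ '' (frontier Ω ×ˢ Set.Icc (0:ℝ) T)) ≤ M := by
    rw [hM]; exact le_trans (le_max_left _ _) (le_max_left _ _)
  have hS2M : sSup ((fun x => n₀ (x, 0)) '' Ω) ≤ M := by
    rw [hM]; exact le_trans (le_max_right _ _) (le_max_left _ _)
  have hS3M : sSup (C '' Ω) ≤ M := by
    rw [hM]; exact le_max_right _ _
  -- the perturbed function w = n₀ - ε t and its maximum point
  have hT' : T ≠ 0 := ne_of_gt hT
  set ε := (n₀ (x, t) - M) / (2 * T) with hε
  have hε0 : 0 < ε := div_pos (by linarith) (by linarith)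
  set w : ((Fin 2 → ℝ) × ℝ) → ℝ := fun p => n₀ p - ε * p.2 with hw
  have hwc : ContinuousOn w (closure Ω ×ˢ Set.Icc (0:ℝ) T) :=
    hc₀.sub ((continuous_const.mul continuous_snd).continuousOn)
  have hxK : (x, t) ∈ closure Ω ×ˢ Set.Icc (0:ℝ) T := ⟨subset_closure hx, ht⟩
  obtain ⟨p₀, hp₀K, hp₀max⟩ := hKc.exists_isMaxOn ⟨(x, t), hxK⟩ hwc
  obtain ⟨x₀, t₀⟩ := p₀
  obtain ⟨hx₀cl, ht₀Icc⟩ := hp₀K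
  have hwxt : M < w (x, t) := by
    have h1 : ε * t ≤ ε * T := mul_le_mul_of_nonneg_left ht.2 hε0.le
    have h2 : ε * T = (n₀ (x, t) - M) / 2 := by
      rw [hε]; field_simp
    show M < n₀ (x, t) - ε * t
    linarith
  have hwp₀ : M < w (x₀, t₀) := lt_of_lt_of_le hwxt (hp₀max hxK)
  have ht₀0' : 0 ≤ t₀ := ht₀Icc.1
  have hn₀p₀ : M < n₀ (x₀, t₀) := by
    have h1 : w (x₀, t₀) = n₀ (x₀, t₀) - ε * t₀ := rfl
    rw [h1] at hwp₀
    nlinarith [mul_nonneg hε0.le ht₀0']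
  -- x₀ is an interior point
  have hx₀Ω : x₀ ∈ Ω := by
    by_contra hxf
    have hfr : (x₀, t₀) ∈ frontier Ω ×ˢ Set.Icc (0:ℝ) T := by
      refine ⟨?_, ht₀Icc⟩
      rw [frontier, hΩo.interior_eq]
      exact ⟨hx₀cl, hxf⟩
    have h1 : n₀ (x₀, t₀) ≤ sSup (n₀ '' (frontier Ω ×ˢ Set.Icc (0:ℝ) T)) :=
      le_csSup hbdd1 (Set.mem_image_of_mem n₀ hfr)
    linarith
  -- t₀ is positive
  have ht₀0 : 0 < t₀ := by
    rcases lt_or_eq_of_le ht₀0' with h | h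
    · exact h
    · exfalso
      have h1 : n₀ (x₀, t₀) ≤ sSup ((fun x => n₀ (x, 0)) '' Ω) :=
        le_csSup hbdd2 ⟨x₀, hx₀Ω, show n₀ (x₀, 0) = n₀ (x₀, t₀) from by rw [← h]⟩
      linarith
  have ht₀Ioc : t₀ ∈ Set.Ioc (0:ℝ) T := ⟨ht₀0, ht₀Icc.2⟩
  -- bounds on C at x₀
  have hCx₀ : C x₀ ≤ M :=
    le_trans (le_trans (le_csSup hbdd3 (Set.mem_image_of_mem C hx₀Ω)) hS3M) le_rfl
  have hC0x₀ : 0 ≤ C x₀ := hC0 x₀ (subset_closure hx₀Ω)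
  -- spatial regularity
  have hf2 : ContDiffOn ℝ 2 (fun z => n₀ (z, t₀)) Ω := hx₀ t₀ ht₀Ioc
  have hV2 : ContDiffOn ℝ 2 (fun z => V (z, t₀)) Ω := hxV t₀ ht₀Ioc
  have hfa : ContDiffAt ℝ 2 (fun z => n₀ (z, t₀)) x₀ := hf2.contDiffAt (hΩo.mem_nhds hx₀Ω)
  have hVa : ContDiffAt ℝ 2 (fun z => V (z, t₀)) x₀ := hV2.contDiffAt (hΩo.mem_nhds hx₀Ω)
  have hfdiff : ∀ y ∈ Ω, DifferentiableAt ℝ (fun z => n₀ (z, t₀)) y := fun y hy =>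
    (hf2.contDiffAt (hΩo.mem_nhds hy)).differentiableAt (by norm_num)
  have hmaxf : ∀ y ∈ Ω, n₀ (y, t₀) ≤ n₀ (x₀, t₀) := by
    intro y hy
    have h1 := hp₀max
      (show (y, t₀) ∈ closure Ω ×ˢ Set.Icc (0:ℝ) T from ⟨subset_closure hy, ht₀Icc⟩)
    have h2 : n₀ (y, t₀) - ε * t₀ ≤ n₀ (x₀, t₀) - ε * t₀ := h1
    linarith
  have hloc : IsLocalMax (fun z => n₀ (z, t₀)) x₀ := by
    filter_upwards [hΩo.mem_nhds hx₀Ω] with y hy using hmaxf y hy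
  have hfd0 : fderiv ℝ (fun z => n₀ (z, t₀)) x₀ = 0 := hloc.fderiv_eq_zero
  have hA2f : ∀ s : Fin 2,
      fderiv ℝ (fun y => fderiv ℝ (fun z => n₀ (z, t₀)) y (ee s)) x₀ (ee s) ≤ 0 := fun s =>
    second_deriv_nonpos hΩo hx₀Ω hfdiff (diffAt_pd hfa (ee s)) hmaxf
  -- Poisson equation at (x₀, t₀)
  have hpois' := hpois x₀ hx₀Ω t₀ ht₀Ioc
  simp only [pd_castSucc] at hpois'
  have hlD2 : (0:ℝ) < lD ^ 2 := by positivity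
  have hΔV : ∑ s : Fin 2,
      fderiv ℝ (fun y => fderiv ℝ (fun z => V (z, t₀)) y (ee s)) x₀ (ee s)
      = (C x₀ - n₀ (x₀, t₀)) / lD ^ 2 := by
    rw [eq_div_iff (ne_of_gt hlD2)]
    linarith [hpois']
  -- time derivative lower bound
  have hder := (ht₀ x₀ hx₀Ω t₀ ht₀Ioc).hasDerivAt
  have hu : HasDerivAt (fun τ => n₀ (x₀, τ) - ε * τ)
      (deriv (fun τ => n₀ (x₀, τ)) t₀ - ε) t₀ := by
    have h2 : HasDerivAt (fun τ : ℝ => ε * τ) ε t₀ := by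
      simpa using (hasDerivAt_id t₀).const_mul ε
    exact hder.sub h2
  have humax : ∀ τ ∈ Set.Icc (0:ℝ) t₀, n₀ (x₀, τ) - ε * τ ≤ n₀ (x₀, t₀) - ε * t₀ := by
    intro τ hτ
    exact hp₀max
      (show (x₀, τ) ∈ closure Ω ×ˢ Set.Icc (0:ℝ) T from
        ⟨hx₀cl, hτ.1, le_trans hτ.2 ht₀Icc.2⟩)
  have hεd : ε ≤ deriv (fun τ => n₀ (x₀, τ)) t₀ := by
    have h := deriv_nonneg_of_max hu ht₀0 humax
    linarith
  -- expand the drift-diffusion equation at (x₀, t₀)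
  have hdd' := hdd x₀ hx₀Ω t₀ ht₀Ioc
  simp only [pd_castSucc] at hdd'
  have hterm : ∀ s : Fin 2,
      fderiv ℝ (fun y => fderiv ℝ (fun z => n₀ (z, t₀)) y (ee s)
          + n₀ (y, t₀) * fderiv ℝ (fun z => V (z, t₀)) y (ee s)) x₀ (ee s)
        = fderiv ℝ (fun y => fderiv ℝ (fun z => n₀ (z, t₀)) y (ee s)) x₀ (ee s)
          + n₀ (x₀, t₀) * fderiv ℝ (fun y => fderiv ℝ (fun z => V (z, t₀)) y (ee s)) x₀ (ee s) := by
    intro s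
    have h1 : DifferentiableAt ℝ (fun y => fderiv ℝ (fun z => n₀ (z, t₀)) y (ee s)) x₀ :=
      diffAt_pd hfa (ee s)
    have h2 : DifferentiableAt ℝ (fun y => fderiv ℝ (fun z => V (z, t₀)) y (ee s)) x₀ :=
      diffAt_pd hVa (ee s)
    have h3 : DifferentiableAt ℝ (fun y => n₀ (y, t₀)) x₀ := hfdiff x₀ hx₀Ω
    rw [fderiv_fun_add h1 (h3.fun_mul h2), ContinuousLinearMap.add_apply,
      fderiv_fun_mul h3 h2, ContinuousLinearMap.add_apply, ContinuousLinearMap.smul_apply,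
      ContinuousLinearMap.smul_apply, hfd0]
    simp [smul_eq_mul]
  simp only [hterm] at hdd'
  rw [Finset.sum_add_distrib, ← Finset.mul_sum, hΔV] at hdd'
  have hsumf : ∑ s : Fin 2,
      fderiv ℝ (fun y => fderiv ℝ (fun z => n₀ (z, t₀)) y (ee s)) x₀ (ee s) ≤ 0 :=
    Finset.sum_nonpos (fun s _ => hA2f s)
  have hneg : n₀ (x₀, t₀) * ((C x₀ - n₀ (x₀, t₀)) / lD ^ 2) < 0 := by
    apply mul_neg_of_pos_of_neg (by linarith)
    exact div_neg_of_neg_of_pos (by linarith) hlD2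
  linarith
end

section
/- Let n₀ ∈ ℝ and n ∈ ℝ³ satisfy 0 < |n| < n₀. Define A ∈ ℝ by e^{−A} = (1/(2π))√(n₀² − |n|²), and define B ∈ ℝ³ by B = −(n/|n|) log √((n₀+|n|)/(n₀−|n|)). Then ∫_{ℝ²} e^{−(A + |p|²/2)} cosh|B| dp = n₀ and −∫_{ℝ²} e^{−(A + |p|²/2)} (sinh|B|/|B|) B dp = n. -/
open MeasureTheory

/-- The leading-order constraint equations determining the Lagrange multipliers
`A ∈ ℝ` and `B ∈ ℝ³` of the thermal equilibrium Wigner distribution: if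
`0 < |n| < n₀`, `e^{−A} = (1/(2π))√(n₀² − |n|²)` and
`B = −(n/|n|) log √((n₀+|n|)/(n₀−|n|))`, then
`∫_{ℝ²} e^{−(A+|p|²/2)} cosh|B| dp = n₀` and
`−∫_{ℝ²} e^{−(A+|p|²/2)} (sinh|B|/|B|) B dp = n`. -/
theorem equilibrium_constraints (n₀ : ℝ) (n : EuclideanSpace ℝ (Fin 3))
    (h1 : 0 < ‖n‖) (h2 : ‖n‖ < n₀)
    (A : ℝ) (B : EuclideanSpace ℝ (Fin 3))
    (hA : Real.exp (-A) = (1 / (2 * Real.pi)) * Real.sqrt (n₀ ^ 2 - ‖n‖ ^ 2))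
    (hB : B = -((Real.log (Real.sqrt ((n₀ + ‖n‖) / (n₀ - ‖n‖))) / ‖n‖) • n)) :
    (∫ p : EuclideanSpace ℝ (Fin 2),
        Real.exp (-(A + ‖p‖ ^ 2 / 2)) * Real.cosh ‖B‖) = n₀ ∧
    (-∫ p : EuclideanSpace ℝ (Fin 2),
        (Real.exp (-(A + ‖p‖ ^ 2 / 2)) * (Real.sinh ‖B‖ / ‖B‖)) • B) = n := by
  set r : ℝ := ‖n‖ with hr
  have ha : (0:ℝ) < n₀ + r := by linarith
  have hb' : (0:ℝ) < n₀ - r := by linarith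
  set sa : ℝ := Real.sqrt (n₀ + r) with hsa
  set sb : ℝ := Real.sqrt (n₀ - r) with hsb
  have hsa0 : 0 < sa := Real.sqrt_pos.mpr ha
  have hsb0 : 0 < sb := Real.sqrt_pos.mpr hb'
  have hsa2 : sa ^ 2 = n₀ + r := Real.sq_sqrt ha.le
  have hsb2 : sb ^ 2 = n₀ - r := Real.sq_sqrt hb'.le
  set L : ℝ := Real.log (Real.sqrt ((n₀ + r) / (n₀ - r))) with hLdef
  have hsq : Real.sqrt ((n₀ + r) / (n₀ - r)) = sa / sb := by
    rw [hsa, hsb, Real.sqrt_div ha.le]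
  have hLpos : 0 < L := by
    rw [hLdef]
    apply Real.log_pos
    rw [hsq]
    rw [lt_div_iff₀ hsb0, one_mul]
    nlinarith
  have hexpL : Real.exp L = sa / sb := by
    rw [hLdef, Real.exp_log (by rw [hsq]; positivity)]
    exact hsq
  have hs : Real.sqrt (n₀ ^ 2 - r ^ 2) = sa * sb := by
    rw [show n₀ ^ 2 - r ^ 2 = (n₀ + r) * (n₀ - r) by ring, Real.sqrt_mul ha.le]
  have hnormB : ‖B‖ = L := by
    rw [hB, norm_neg, norm_smul, Real.norm_eq_abs, ← hr,
      abs_of_pos (div_pos hLpos h1), div_mul_cancel₀ _ h1.ne']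
  have hcosh : Real.cosh L = n₀ / (sa * sb) := by
    rw [Real.cosh_eq, hexpL, Real.exp_neg, hexpL]
    field_simp
    linear_combination hsa2 + hsb2
  have hsinh : Real.sinh L = r / (sa * sb) := by
    rw [Real.sinh_eq, hexpL, Real.exp_neg, hexpL]
    field_simp
    linear_combination hsa2 - hsb2
  have hπ : (0:ℝ) < Real.pi := Real.pi_pos
  have hint : (∫ p : EuclideanSpace ℝ (Fin 2),
      Real.exp (-(1/2) * ‖p‖ ^ 2)) = 2 * Real.pi := by
    rw [GaussianFourier.integral_rexp_neg_mul_sq_norm (by norm_num : (0:ℝ) < 1/2),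
      finrank_euclideanSpace_fin]
    norm_num
    ring
  have hsplit : ∀ (c : ℝ), (∫ p : EuclideanSpace ℝ (Fin 2),
      Real.exp (-(A + ‖p‖ ^ 2 / 2)) * c) = Real.exp (-A) * c * (2 * Real.pi) := by
    intro c
    have : ∀ p : EuclideanSpace ℝ (Fin 2),
        Real.exp (-(A + ‖p‖ ^ 2 / 2)) * c
          = (Real.exp (-A) * c) * Real.exp (-(1/2) * ‖p‖ ^ 2) := by
      intro p
      rw [show -(A + ‖p‖ ^ 2 / 2) = -A + -(1/2) * ‖p‖ ^ 2 by ring, Real.exp_add]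
      ring
    simp_rw [this, integral_const_mul, hint]
  constructor
  · rw [hsplit, hA, hnormB, hcosh, hs]
    have hsab : sa * sb ≠ 0 := by positivity
    field_simp
  · have : (∫ p : EuclideanSpace ℝ (Fin 2),
        (Real.exp (-(A + ‖p‖ ^ 2 / 2)) * (Real.sinh ‖B‖ / ‖B‖)) • B)
        = (Real.exp (-A) * (Real.sinh ‖B‖ / ‖B‖) * (2 * Real.pi)) • B := by
      rw [integral_smul_const, hsplit]
    rw [this, hA, hnormB, hsinh, hs, hB]
    rw [smul_neg, neg_neg, smul_smul]
    have hc : 1 / (2 * Real.pi) * (sa * sb) * (r / (sa * sb) / L) * (2 * Real.pi) * (L / r)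
        = 1 := by
      field_simp
    rw [hc, one_smul]
end
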